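/- arXiv:2206.09172 — 6 statements merged into one kernel-verified Lean document; each statement's English description precedes it below -/
import Mathlib

section
/- (Combinatorial content of Corollary 3.16(2), type C, highest weight supported above k.) Let n ≥ 3 and 2 ≤ k ≤ n−1, and let a_1,…,a_n be nonnegative integers with a_u = 0 for all 1 ≤ u ≤ k. Then every integer l with 1 ≤ l ≤ M^C_{k,a} belongs to the step-matrix entry set S^C_{k,a} if and only if a_i ≤ k−1 for all k+1 ≤ i ≤ n. -/
open Finset

lemma shiftSum (a : ℕ → ℤ) (k i m : ℕ) (h0 : ∀ u, 1 ≤ u → u ≤ k → a u = 0) (hi : i ≤ k) :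
    ∑ u ∈ Icc (k + 1 - i) m, a u = ∑ u ∈ Icc (k + 1) m, a u := by
  symm
  apply Finset.sum_subset
  · intro u hu; simp only [mem_Icc] at *; omega
  · intro u hu hu'
    simp only [mem_Icc] at hu hu'
    exact h0 u (by omega) (by omega)

lemma shiftSumQ (a : ℕ → ℤ) (k i m : ℕ) (h0 : ∀ u, 1 ≤ u → u ≤ k → a u = 0) (hi : i ≤ k) :
    ∑ u ∈ Icc (k + 1 - i) m, (a u : ℚ) = ∑ u ∈ Icc (k + 1) m, (a u : ℚ) := by
  exact_mod_cast congrArg (Int.cast : ℤ → ℚ) (shiftSum a k i m h0 hi)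

lemma sumMono (a : ℕ → ℤ) (n c m1 m2 : ℕ) (ha : ∀ u, 1 ≤ u → u ≤ n → 0 ≤ a u)
    (hc : 1 ≤ c) (h12 : m1 ≤ m2) (h2 : m2 ≤ n) :
    ∑ u ∈ Icc c m1, a u ≤ ∑ u ∈ Icc c m2, a u := by
  apply Finset.sum_le_sum_of_subset_of_nonneg (Finset.Icc_subset_Icc_right h12)
  intro u hu _
  simp only [mem_Icc] at hu
  exact ha u (by omega) (by omega)

lemma sumNonneg (a : ℕ → ℤ) (n c m : ℕ) (ha : ∀ u, 1 ≤ u → u ≤ n → 0 ≤ a u)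
    (hc : 1 ≤ c) (h2 : m ≤ n) : 0 ≤ ∑ u ∈ Icc c m, a u := by
  apply Finset.sum_nonneg
  intro u hu
  simp only [mem_Icc] at hu
  exact ha u (by omega) (by omega)

lemma sumTop (f : ℕ → ℤ) (c m : ℕ) (hc : 1 ≤ c) (h : c ≤ m) :
    ∑ u ∈ Icc c m, f u = ∑ u ∈ Icc c (m - 1), f u + f m := by
  obtain ⟨b, rfl⟩ : ∃ b, m = b + 1 := ⟨m - 1, by omega⟩
  rw [Finset.sum_Icc_succ_top (by omega) f]
  simp

lemma sumBot (f : ℕ → ℤ) (c m : ℕ) (h : c ≤ m) :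
    ∑ u ∈ Icc c m, f u = f c + ∑ u ∈ Icc (c + 1) m, f u := by
  rw [show Icc c m = insert c (Icc (c+1) m) by ext x; simp only [mem_Icc, mem_insert]; omega]
  rw [Finset.sum_insert (by simp only [mem_Icc]; omega)]


/-- The step-matrix entry set `S^C_{k,a}`. -/
def SC (n k : ℕ) (a : ℕ → ℤ) : Set ℚ :=
  {x | ∃ i j : ℕ, 1 ≤ i ∧ i ≤ k ∧ 1 ≤ j ∧ j ≤ n - k ∧
    x = (∑ u ∈ Icc (k + 1 - i) (k + j - 1), (a u : ℚ)) + i + j - 1} ∪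
  {x | ∃ i j : ℕ, 1 ≤ i ∧ i ≤ k ∧ 1 ≤ j ∧ j ≤ n - k ∧
    x = (∑ u ∈ Icc (k + 1 - i) (n - 1), (a u : ℚ))
      + (∑ u ∈ Icc (n + 1 - j) (n - 1), (a u : ℚ)) + 2 * (a n : ℚ)
      + n - k + i + j} ∪
  {x | ∃ i j : ℕ, 1 ≤ i ∧ i ≤ j ∧ j ≤ k ∧
    x = ((∑ u ∈ Icc (k + 1 - i) (n - 1), (a u : ℚ))
      + (∑ u ∈ Icc (k + 1 - j) (n - 1), (a u : ℚ)) + 2 * (a n : ℚ)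
      + i + j + 2 * n - 2 * k) / 2}

/-- `M^C_{k,a}`, the largest entry of the step matrix. -/
def MC (n k : ℕ) (a : ℕ → ℤ) : ℤ :=
  (∑ u ∈ Icc 1 (n - 1), a u) + (∑ u ∈ Icc (k + 1) (n - 1), a u) + 2 * a n
    + 2 * (n : ℤ) - (k : ℤ)

/-- Corollary 3.16(2) for `Cₙ/P(α_k)`: for a highest weight supported above `k`,
every integer in `[1, M^C_{k,a}]` is an entry of the step matrix iff
`a_i ≤ k-1` for `k+1 ≤ i ≤ n`. -/
theorem cor_C_support_above (n k : ℕ) (hn : 3 ≤ n) (hk1 : 2 ≤ k) (hkn : k ≤ n - 1)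
    (a : ℕ → ℤ) (ha : ∀ u, 1 ≤ u → u ≤ n → 0 ≤ a u)
    (h0 : ∀ u, 1 ≤ u → u ≤ k → a u = 0) :
    (∀ l : ℤ, 1 ≤ l → l ≤ MC n k a → (l : ℚ) ∈ SC n k a) ↔
      (∀ i, k + 1 ≤ i → i ≤ n → a i ≤ (k : ℤ) - 1) := by
  classical
  set A : ℤ := ∑ u ∈ Icc (k+1) (n-1), a u with hA
  have hAnn : 0 ≤ A := by rw [hA]; exact sumNonneg a n (k+1) (n-1) ha (by omega) (by omega)
  have han : 0 ≤ a n := ha n (by omega) le_rfl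
  have h1n : (∑ u ∈ Icc 1 (n-1), a u) = A := by
    have hs := shiftSum a k k (n-1) h0 le_rfl
    rw [show k+1-k = 1 by omega] at hs
    rw [hs, hA]
  have hMC : MC n k a = 2*A + 2*a n + 2*(n:ℤ) - k := by
    unfold MC
    rw [h1n, ← hA]
    ring
  constructor
  · -- forward: all covered → bounds
    intro h m hm1 hm2
    by_contra hma
    push_neg at hma
    have hak : (k:ℤ) ≤ a m := by omega
    by_cases hmn : m = n
    · -- a n ≥ k : l = A + n is not covered
      subst hmn
      have hl := h (A + (m:ℤ)) (by push_cast; linarith)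
        (by rw [hMC]
            have h1 : (k:ℤ) ≤ (m:ℤ) := by exact_mod_cast (show k ≤ m by omega)
            have h2 : (0:ℤ) ≤ (k:ℤ) := Int.natCast_nonneg k
            linarith)
      simp only [SC, Set.mem_union, Set.mem_setOf_eq] at hl
      rcases hl with (⟨i, j, hi1, hik, hj1, hjk, hx⟩ | ⟨i, j, hi1, hik, hj1, hjk, hx⟩) |
        ⟨i, j, hi1, hij, hjk, hx⟩
      · rw [shiftSumQ a k i _ h0 hik] at hx
        have hx' : A + (m:ℤ) = (∑ u ∈ Icc (k+1) (k+j-1), a u) + i + j - 1 := by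
          exact_mod_cast hx
        have hb : (∑ u ∈ Icc (k+1) (k+j-1), a u) ≤ A := by
          rw [hA]; exact sumMono a m (k+1) (k+j-1) (m-1) ha (by omega) (by omega) (by omega)
        have hi' : (i:ℤ) ≤ k := by exact_mod_cast hik
        have hj' : (j:ℤ) + k ≤ m := by omega
        linarith
      · rw [shiftSumQ a k i _ h0 hik] at hx
        have hx' : A + (m:ℤ) = (∑ u ∈ Icc (k+1) (m-1), a u) + (∑ u ∈ Icc (m+1-j) (m-1), a u)
            + 2*a m + m - k + i + j := by
          exact_mod_cast hx
        rw [← hA] at hx' 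
        have hR : 0 ≤ ∑ u ∈ Icc (m+1-j) (m-1), a u :=
          sumNonneg a m (m+1-j) (m-1) ha (by omega) (by omega)
        have hi' : (1:ℤ) ≤ i := by exact_mod_cast hi1
        have hj' : (1:ℤ) ≤ j := by exact_mod_cast hj1
        have hk' : (2:ℤ) ≤ k := by exact_mod_cast hk1
        linarith
      · rw [shiftSumQ a k i _ h0 (le_trans hij hjk), shiftSumQ a k j _ h0 hjk,
          eq_div_iff (by norm_num : (2:ℚ) ≠ 0)] at hx
        have hx' : (A + (m:ℤ)) * 2 = (∑ u ∈ Icc (k+1) (m-1), a u)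
            + (∑ u ∈ Icc (k+1) (m-1), a u) + 2*a m + i + j + 2*m - 2*k := by
          exact_mod_cast hx
        rw [← hA] at hx'
        have hi' : (1:ℤ) ≤ i := by exact_mod_cast hi1
        have hj' : (1:ℤ) ≤ (j:ℤ) := by exact_mod_cast le_trans hi1 hij
        linarith
    · -- m ≤ n - 1 : l = (∑_{k+1}^{m-1} a) + m is not covered
      have hmn' : m ≤ n - 1 := by omega
      have hSm : (∑ u ∈ Icc (k+1) (m-1), a u) + a m ≤ A := by
        rw [hA, ← sumTop a (k+1) m (by omega) (by omega)]
        exact sumMono a n (k+1) m (n-1) ha (by omega) (by omega) (by omega)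
      have hSnn : 0 ≤ ∑ u ∈ Icc (k+1) (m-1), a u :=
        sumNonneg a n (k+1) (m-1) ha (by omega) (by omega)
      have hm' : (k:ℤ) + 1 ≤ m := by exact_mod_cast hm1
      have hmn'' : (m:ℤ) + 1 ≤ n := by omega
      have hl := h ((∑ u ∈ Icc (k+1) (m-1), a u) + (m:ℤ))
        (by push_cast; linarith) (by rw [hMC]; linarith)
      simp only [SC, Set.mem_union, Set.mem_setOf_eq] at hl
      rcases hl with (⟨i, j, hi1, hik, hj1, hjk, hx⟩ | ⟨i, j, hi1, hik, hj1, hjk, hx⟩) |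
        ⟨i, j, hi1, hij, hjk, hx⟩
      · rw [shiftSumQ a k i _ h0 hik] at hx
        have hx' : (∑ u ∈ Icc (k+1) (m-1), a u) + (m:ℤ)
            = (∑ u ∈ Icc (k+1) (k+j-1), a u) + i + j - 1 := by exact_mod_cast hx
        have hi1' : (1:ℤ) ≤ i := by exact_mod_cast hi1
        have hik' : (i:ℤ) ≤ k := by exact_mod_cast hik
        rcases le_or_gt (k + j) m with hcase | hcase
        · have hb : (∑ u ∈ Icc (k+1) (k+j-1), a u) ≤ ∑ u ∈ Icc (k+1) (m-1), a u :=
            sumMono a n (k+1) (k+j-1) (m-1) ha (by omega) (by omega) (by omega)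
          have hj' : (j:ℤ) + k ≤ m := by omega
          linarith
        · have hb : (∑ u ∈ Icc (k+1) (m-1), a u) + a m ≤ ∑ u ∈ Icc (k+1) (k+j-1), a u := by
            rw [← sumTop a (k+1) m (by omega) (by omega)]
            exact sumMono a n (k+1) m (k+j-1) ha (by omega) (by omega) (by omega)
          have hj' : (m:ℤ) + 1 ≤ k + j := by omega
          linarith
      · rw [shiftSumQ a k i _ h0 hik] at hx
        have hx' : (∑ u ∈ Icc (k+1) (m-1), a u) + (m:ℤ)
            = (∑ u ∈ Icc (k+1) (n-1), a u) + (∑ u ∈ Icc (n+1-j) (n-1), a u)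
              + 2*a n + n - k + i + j := by
          exact_mod_cast hx
        rw [← hA] at hx' 
        have hR : 0 ≤ ∑ u ∈ Icc (n+1-j) (n-1), a u :=
          sumNonneg a n (n+1-j) (n-1) ha (by omega) (by omega)
        have hi' : (1:ℤ) ≤ i := by exact_mod_cast hi1
        have hj' : (1:ℤ) ≤ j := by exact_mod_cast hj1
        linarith
      · rw [shiftSumQ a k i _ h0 (le_trans hij hjk), shiftSumQ a k j _ h0 hjk,
          eq_div_iff (by norm_num : (2:ℚ) ≠ 0)] at hx
        have hx' : ((∑ u ∈ Icc (k+1) (m-1), a u) + (m:ℤ)) * 2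
            = (∑ u ∈ Icc (k+1) (n-1), a u) + (∑ u ∈ Icc (k+1) (n-1), a u)
              + 2*a n + i + j + 2*n - 2*k := by
          exact_mod_cast hx
        rw [← hA] at hx' 
        have hi' : (1:ℤ) ≤ i := by exact_mod_cast hi1
        have hj' : (1:ℤ) ≤ (j:ℤ) := by exact_mod_cast le_trans hi1 hij
        linarith
  · -- backward: bounds → all covered
    intro hbd l hl1 hl2
    rw [hMC] at hl2
    have hanb : a n ≤ (k:ℤ) - 1 := hbd n (by omega) le_rfl
    simp only [SC, Set.mem_union, Set.mem_setOf_eq]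
    rcases lt_or_ge l (A + (n:ℤ)) with hc1 | hc1
    · -- type 1
      left; left
      set P : ℕ → Prop := fun j => (∑ u ∈ Icc (k+1) (k+j-1), a u) + (j:ℤ) ≤ l with hP
      have hP1 : P 1 := by
        simp only [hP]
        rw [show k+1-1 = k by omega, Finset.Icc_eq_empty (by omega)]
        simpa using hl1
      set j := Nat.findGreatest P (n - k) with hjdef
      have hj1 : 1 ≤ j := Nat.le_findGreatest (by omega) hP1
      have hjnk : j ≤ n - k := by rw [hjdef]; exact Nat.findGreatest_le _
      have hjP : P j := by rw [hjdef]; exact Nat.findGreatest_spec (m := 1) (by omega) hP1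
      simp only [hP] at hjP
      have hup : l ≤ (∑ u ∈ Icc (k+1) (k+j-1), a u) + (j:ℤ) + (k - 1) := by
        rcases eq_or_lt_of_le hjnk with he | hlt
        · rw [show k + j - 1 = n - 1 by omega, ← hA]
          have hj' : (j:ℤ) = (n:ℤ) - k := by omega
          linarith
        · have hfg : Nat.findGreatest P (n - k) < j + 1 := by rw [← hjdef]; omega
          have hng : ¬ P (j + 1) := Nat.findGreatest_is_greatest hfg (by omega)
          simp only [hP] at hng
          push_neg at hng
          have hstep : (∑ u ∈ Icc (k+1) (k+(j+1)-1), a u)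
              = (∑ u ∈ Icc (k+1) (k+j-1), a u) + a (k+j) := by
            rw [show k+(j+1)-1 = k+j by omega, sumTop a (k+1) (k+j) (by omega) (by omega),
              show k+j-1 = k+j-1 from rfl]
          rw [hstep] at hng
          have habd := hbd (k+j) (by omega) (by omega)
          push_cast at hng
          linarith
      have hiD : ((l - ((∑ u ∈ Icc (k+1) (k+j-1), a u) + (j:ℤ)) + 1).toNat : ℤ)
          = l - ((∑ u ∈ Icc (k+1) (k+j-1), a u) + (j:ℤ)) + 1 :=
        Int.toNat_of_nonneg (by linarith)
      refine ⟨(l - ((∑ u ∈ Icc (k+1) (k+j-1), a u) + (j:ℤ)) + 1).toNat, j, ?_, ?_, hj1, hjnk, ?_⟩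
      · exact_mod_cast show (1:ℤ) ≤ ((l - ((∑ u ∈ Icc (k+1) (k+j-1), a u) + (j:ℤ)) + 1).toNat : ℤ)
          by rw [hiD]; linarith
      · exact_mod_cast show ((l - ((∑ u ∈ Icc (k+1) (k+j-1), a u) + (j:ℤ)) + 1).toNat : ℤ) ≤ k
          by rw [hiD]; linarith
      · rw [shiftSumQ a k _ _ h0 (by
          exact_mod_cast show ((l - ((∑ u ∈ Icc (k+1) (k+j-1), a u) + (j:ℤ)) + 1).toNat : ℤ) ≤ k
            by rw [hiD]; linarith)]
        exact_mod_cast show (l:ℤ) = (∑ u ∈ Icc (k+1) (k+j-1), a u)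
            + ((l - ((∑ u ∈ Icc (k+1) (k+j-1), a u) + (j:ℤ)) + 1).toNat : ℤ) + (j:ℤ) - 1 by
          rw [hiD]; ring
    rcases le_or_gt l (A + a n + (n:ℤ)) with hc2 | hc2
    · -- type 3
      right
      have hiD : ((l - (A + a n + (n:ℤ) - k)).toNat : ℤ) = l - (A + a n + (n:ℤ) - k) :=
        Int.toNat_of_nonneg (by linarith)
      have htk : (l - (A + a n + (n:ℤ) - k)).toNat ≤ k := by
        exact_mod_cast show ((l - (A + a n + (n:ℤ) - k)).toNat : ℤ) ≤ k by rw [hiD]; linarith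
      refine ⟨(l - (A + a n + (n:ℤ) - k)).toNat, (l - (A + a n + (n:ℤ) - k)).toNat,
        ?_, le_rfl, htk, ?_⟩
      · exact_mod_cast show (1:ℤ) ≤ ((l - (A + a n + (n:ℤ) - k)).toNat : ℤ) by
          rw [hiD]; linarith
      · rw [shiftSumQ a k _ _ h0 htk, eq_div_iff (by norm_num : (2:ℚ) ≠ 0)]
        have hz : l * 2 = (∑ u ∈ Icc (k+1) (n-1), a u) + (∑ u ∈ Icc (k+1) (n-1), a u)
            + 2*a n + ((l - (A + a n + (n:ℤ) - k)).toNat : ℤ)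
            + ((l - (A + a n + (n:ℤ) - k)).toNat : ℤ) + 2*n - 2*k := by
          rw [hiD, hA]; ring
        exact_mod_cast hz
    · -- type 2
      left; right
      set P : ℕ → Prop := fun j => A + (∑ u ∈ Icc (n+1-j) (n-1), a u) + 2*a n
        + ((n:ℤ) - k) + (j:ℤ) + 1 ≤ l with hP
      have hP1 : P 1 := by
        simp only [hP]
        rw [show n+1-1 = n by omega, Finset.Icc_eq_empty (by omega)]
        simp only [Finset.sum_empty]
        push_cast
        linarith
      set j := Nat.findGreatest P (n - k) with hjdef
      have hj1 : 1 ≤ j := Nat.le_findGreatest (by omega) hP1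
      have hjnk : j ≤ n - k := by rw [hjdef]; exact Nat.findGreatest_le _
      have hjP : P j := by rw [hjdef]; exact Nat.findGreatest_spec (m := 1) (by omega) hP1
      simp only [hP] at hjP
      have hup : l ≤ A + (∑ u ∈ Icc (n+1-j) (n-1), a u) + 2*a n + ((n:ℤ) - k)
          + (j:ℤ) + 1 + (k - 1) := by
        rcases eq_or_lt_of_le hjnk with he | hlt
        · rw [show n + 1 - j = k + 1 by omega, ← hA]
          have hj' : (j:ℤ) = (n:ℤ) - k := by omega
          linarith
        · have hfg : Nat.findGreatest P (n - k) < j + 1 := by rw [← hjdef]; omega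
          have hng : ¬ P (j + 1) := Nat.findGreatest_is_greatest hfg (by omega)
          simp only [hP] at hng
          push_neg at hng
          have hstep : (∑ u ∈ Icc (n+1-(j+1)) (n-1), a u)
              = a (n-j) + ∑ u ∈ Icc (n+1-j) (n-1), a u := by
            rw [show n+1-(j+1) = n-j by omega, sumBot a (n-j) (n-1) (by omega),
              show n-j+1 = n+1-j by omega]
          rw [hstep] at hng
          have habd := hbd (n-j) (by omega) (by omega)
          push_cast at hng
          linarith
      have hlow : A + (∑ u ∈ Icc (n+1-j) (n-1), a u) + 2*a n + ((n:ℤ) - k) + (j:ℤ) + 1 ≤ l :=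
        hjP
      have hiD : ((l - (A + (∑ u ∈ Icc (n+1-j) (n-1), a u) + 2*a n + ((n:ℤ) - k) + (j:ℤ))).toNat : ℤ)
          = l - (A + (∑ u ∈ Icc (n+1-j) (n-1), a u) + 2*a n + ((n:ℤ) - k) + (j:ℤ)) :=
        Int.toNat_of_nonneg (by linarith)
      have hik : (l - (A + (∑ u ∈ Icc (n+1-j) (n-1), a u) + 2*a n + ((n:ℤ) - k) + (j:ℤ))).toNat ≤ k := by
        exact_mod_cast show ((l - (A + (∑ u ∈ Icc (n+1-j) (n-1), a u) + 2*a n + ((n:ℤ) - k) + (j:ℤ))).toNat : ℤ) ≤ k by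
          rw [hiD]; linarith
      refine ⟨(l - (A + (∑ u ∈ Icc (n+1-j) (n-1), a u) + 2*a n + ((n:ℤ) - k) + (j:ℤ))).toNat, j,
        ?_, hik, hj1, hjnk, ?_⟩
      · exact_mod_cast show (1:ℤ) ≤ ((l - (A + (∑ u ∈ Icc (n+1-j) (n-1), a u) + 2*a n + ((n:ℤ) - k) + (j:ℤ))).toNat : ℤ) by
          rw [hiD]; linarith
      · rw [shiftSumQ a k _ _ h0 hik]
        have hz : l = (∑ u ∈ Icc (k+1) (n-1), a u) + (∑ u ∈ Icc (n+1-j) (n-1), a u)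
            + 2*a n + (n:ℤ) - (k:ℤ)
            + ((l - (A + (∑ u ∈ Icc (n+1-j) (n-1), a u) + 2*a n + ((n:ℤ) - k) + (j:ℤ))).toNat : ℤ)
            + (j:ℤ) := by
          rw [hiD, hA]; ring
        exact_mod_cast hz
end

section
/- (Combinatorial content of Corollary 3.17(1), type D, highest weight supported below k.) Let n ≥ 4 and 2 ≤ k ≤ n−2, and let a_1,…,a_n be integers with a_u = 0 for all k ≤ u ≤ n and 0 ≤ a_u ≤ 2n−2k−1 for all 1 ≤ u ≤ k−1. Then every integer l with 1 ≤ l ≤ M^D_{k,a} belongs to the step-matrix entry set S^D_{k,a}. -/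
open Finset

/-- The step-matrix entry set `S^D_{k,a}`. -/
def SD (n k : ℕ) (a : ℕ → ℤ) : Set ℚ :=
  {x | ∃ i j : ℕ, 1 ≤ i ∧ i ≤ k ∧ 1 ≤ j ∧ j ≤ n - k ∧
    x = (∑ u ∈ Icc (k + 1 - i) (k + j - 1), (a u : ℚ)) + i + j - 1} ∪
  {x | ∃ i j : ℕ, 1 ≤ i ∧ i ≤ k ∧ 1 ≤ j ∧ j ≤ n - k ∧
    x = (∑ u ∈ Icc (k + 1 - i) (n - 2), (a u : ℚ))
      + (∑ u ∈ Icc (n + 1 - j) n, (a u : ℚ))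
      + n - k + i + j - 2} ∪
  {x | ∃ i j : ℕ, 1 ≤ i ∧ i < j ∧ j ≤ k ∧
    x = ((∑ u ∈ Icc (k + 1 - i) (n - 2), (a u : ℚ))
      + (∑ u ∈ Icc (k + 1 - j) n, (a u : ℚ))
      + i + j + 2 * n - 2 * k - 2) / 2}

/-- `M^D_{k,a}`, the largest entry of the step matrix. -/
def MD (n k : ℕ) (a : ℕ → ℤ) : ℤ :=
  (∑ u ∈ Icc 1 n, a u) + (∑ u ∈ Icc (k + 1) (n - 2), a u)
    + 2 * (n : ℤ) - (k : ℤ) - 2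

/-- Partial sums `S_i = a_{k+1-i} + ⋯ + a_{k-1}`. -/
def Saux (k : ℕ) (a : ℕ → ℤ) (i : ℕ) : ℤ := ∑ u ∈ Icc (k + 1 - i) (k - 1), a u

lemma Saux_cast (k : ℕ) (a : ℕ → ℤ) (i : ℕ) :
    ((Saux k a i : ℤ) : ℚ) = ∑ u ∈ Icc (k + 1 - i) (k - 1), (a u : ℚ) := by
  simp [Saux]

section helpers

variable {n k : ℕ} {a : ℕ → ℤ}

lemma sumA (hkn : k ≤ n) (h0 : ∀ u, k ≤ u → u ≤ n → a u = 0)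
    {i j : ℕ} (hj : j ≤ n - k) :
    ∑ u ∈ Icc (k + 1 - i) (k + j - 1), (a u : ℚ)
      = ∑ u ∈ Icc (k + 1 - i) (k - 1), (a u : ℚ) := by
  refine (Finset.sum_subset (Icc_subset_Icc le_rfl (by omega)) ?_).symm
  intro u hu hu'
  simp only [mem_Icc] at hu hu'
  have : a u = 0 := h0 u (by omega) (by omega)
  simp [this]

lemma sumB (hkn : k ≤ n - 2) (h0 : ∀ u, k ≤ u → u ≤ n → a u = 0) (i : ℕ) :
    ∑ u ∈ Icc (k + 1 - i) (n - 2), (a u : ℚ)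
      = ∑ u ∈ Icc (k + 1 - i) (k - 1), (a u : ℚ) := by
  refine (Finset.sum_subset (Icc_subset_Icc le_rfl (by omega)) ?_).symm
  intro u hu hu'
  simp only [mem_Icc] at hu hu'
  have : a u = 0 := h0 u (by omega) (by omega)
  simp [this]

lemma sumC (hkn : k ≤ n) (h0 : ∀ u, k ≤ u → u ≤ n → a u = 0)
    {j : ℕ} (hj : j ≤ n - k) :
    ∑ u ∈ Icc (n + 1 - j) n, (a u : ℚ) = 0 := by
  refine Finset.sum_eq_zero ?_
  intro u hu
  simp only [mem_Icc] at hu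
  have : a u = 0 := h0 u (by omega) (by omega)
  simp [this]

lemma sumD (hkn : k ≤ n) (h0 : ∀ u, k ≤ u → u ≤ n → a u = 0) (j : ℕ) :
    ∑ u ∈ Icc (k + 1 - j) n, (a u : ℚ)
      = ∑ u ∈ Icc (k + 1 - j) (k - 1), (a u : ℚ) := by
  refine (Finset.sum_subset (Icc_subset_Icc le_rfl (by omega)) ?_).symm
  intro u hu hu'
  simp only [mem_Icc] at hu hu'
  have : a u = 0 := h0 u (by omega) (by omega)
  simp [this]

lemma Saux_succ (hk : 1 ≤ k) {i : ℕ} (h1 : 1 ≤ i) (h2 : i < k) :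
    Saux k a (i + 1) = a (k - i) + Saux k a i := by
  unfold Saux
  have e1 : k + 1 - (i + 1) = k - i := by omega
  have e2 : k - i + 1 = k + 1 - i := by omega
  rw [e1, ← Finset.insert_Icc_add_one_left_eq_Icc (by omega : k - i ≤ k - 1),
    Finset.sum_insert (by simp only [mem_Icc]; omega), e2]

end helpers

/-- Corollary 3.17(1) for `Dₙ/P(α_k)`: if the highest weight is supported below `k`
with coefficients at most `2n-2k-1`, then every integer in `[1, M^D_{k,a}]` is an
entry of the step matrix. -/
theorem cor_D_lt_support_below (n k : ℕ) (hn : 4 ≤ n) (hk1 : 2 ≤ k) (hkn : k ≤ n - 2)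
    (a : ℕ → ℤ) (h0 : ∀ u, k ≤ u → u ≤ n → a u = 0)
    (hb : ∀ u, 1 ≤ u → u ≤ k - 1 →
      0 ≤ a u ∧ a u ≤ 2 * (n : ℤ) - 2 * (k : ℤ) - 1) :
    ∀ l : ℤ, 1 ≤ l → l ≤ MD n k a → (l : ℚ) ∈ SD n k a := by
  have hkn' : k ≤ n := by omega
  have hnk2 : 2 ≤ n - k := by omega
  -- membership helpers
  have mem1 : ∀ i j : ℕ, 1 ≤ i → i ≤ k → 1 ≤ j → j ≤ n - k →
      ∀ x : ℚ, x = (Saux k a i : ℚ) + i + j - 1 → x ∈ SD n k a := by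
    intro i j h1 h2 h3 h4 x hx
    refine Or.inl (Or.inl ⟨i, j, h1, h2, h3, h4, ?_⟩)
    rw [sumA hkn' h0 h4, ← Saux_cast]; exact hx
  have mem2 : ∀ i j : ℕ, 1 ≤ i → i ≤ k → 1 ≤ j → j ≤ n - k →
      ∀ x : ℚ, x = (Saux k a i : ℚ) + n - k + i + j - 2 → x ∈ SD n k a := by
    intro i j h1 h2 h3 h4 x hx
    refine Or.inl (Or.inr ⟨i, j, h1, h2, h3, h4, ?_⟩)
    rw [sumB hkn h0, sumC hkn' h0 h4, ← Saux_cast, hx]; ring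
  have mem3 : ∀ i j : ℕ, 1 ≤ i → i < j → j ≤ k →
      ∀ x : ℚ, x = ((Saux k a i : ℚ) + (Saux k a j : ℚ)
        + i + j + 2 * n - 2 * k - 2) / 2 → x ∈ SD n k a := by
    intro i j h1 h2 h3 x hx
    refine Or.inr ⟨i, j, h1, h2, h3, ?_⟩
    rw [sumB hkn h0, sumD hkn' h0, ← Saux_cast, ← Saux_cast, hx]
  -- interval coverage
  have hmem : ∀ i : ℕ, 1 ≤ i → i ≤ k → ∀ l : ℤ,
      Saux k a i + i ≤ l → l ≤ Saux k a i + i + 2 * ((n : ℤ) - k) - 2 →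
      (l : ℚ) ∈ SD n k a := by
    intro i h1 h2 l hl1 hl2
    by_cases hc : l ≤ Saux k a i + i + ((n : ℤ) - k) - 1
    · set j : ℕ := (l - Saux k a i - i + 1).toNat with hjdef
      have hj : (j : ℤ) = l - Saux k a i - i + 1 := Int.toNat_of_nonneg (by omega)
      have hZ : l = Saux k a i + i + j - 1 := by omega
      refine mem1 i j h1 h2 (by omega) (by omega) _ ?_
      exact_mod_cast congrArg (fun z : ℤ => (z : ℚ)) hZ
    · set j : ℕ := (l - Saux k a i - i - ((n : ℤ) - k) + 2).toNat with hjdef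
      have hj : (j : ℤ) = l - Saux k a i - i - ((n : ℤ) - k) + 2 :=
        Int.toNat_of_nonneg (by omega)
      have hZ : l = Saux k a i + n - k + i + j - 2 := by omega
      refine mem2 i j h1 h2 (by omega) (by omega) _ ?_
      exact_mod_cast congrArg (fun z : ℤ => (z : ℚ)) hZ
  -- gap coverage
  have hgap : ∀ i : ℕ, 1 ≤ i → i < k →
      a (k - i) = 2 * (n : ℤ) - 2 * k - 1 →
      ∀ l : ℤ, l = Saux k a i + i + 2 * (n : ℤ) - 2 * k - 1 →
      (l : ℚ) ∈ SD n k a := by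
    intro i h1 h2 ha l hl
    refine mem3 i (i + 1) h1 (by omega) (by omega) _ ?_
    have hs := Saux_succ (a := a) (by omega : 1 ≤ k) h1 h2
    have hZ : l * 2 = Saux k a i + Saux k a (i + 1) + i + (i + 1)
        + 2 * (n : ℤ) - 2 * k - 2 := by omega
    rw [eq_div_iff (by norm_num : (2 : ℚ) ≠ 0)]
    exact_mod_cast congrArg (fun z : ℤ => (z : ℚ)) hZ
  -- main induction
  have main : ∀ i : ℕ, 1 ≤ i → i ≤ k → ∀ l : ℤ, 1 ≤ l →
      l ≤ Saux k a i + i + 2 * ((n : ℤ) - k) - 2 → (l : ℚ) ∈ SD n k a := by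
    intro i
    induction i with
    | zero => omega
    | succ m ih =>
      intro _ hmk l hl1 hl2
      rcases Nat.eq_zero_or_pos m with hm | hm
      · subst hm
        rw [show (0 : ℕ) + 1 = 1 from rfl] at hl2
        have hS1 : Saux k a 1 = 0 := by
          rw [Saux, show k + 1 - 1 = k from rfl,
            Finset.Icc_eq_empty_of_lt (by omega : k - 1 < k), Finset.sum_empty]
        refine hmem 1 le_rfl (by omega) l ?_ ?_ <;> omega
      · have hm1 : 1 ≤ m := hm
        have hmk' : m < k := by omega
        have hs := Saux_succ (a := a) (by omega : 1 ≤ k) hm1 hmk'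
        have hb' := hb (k - m) (by omega) (by omega)
        by_cases hc1 : l ≤ Saux k a m + m + 2 * ((n : ℤ) - k) - 2
        · exact ih hm1 (by omega) l hl1 hc1
        · by_cases hc2 : Saux k a (m + 1) + (m + 1) ≤ l
          · exact hmem (m + 1) (by omega) hmk l hc2 hl2
          · have ha : a (k - m) = 2 * (n : ℤ) - 2 * k - 1 := by omega
            exact hgap m hm1 hmk' ha l (by omega)
  -- conclusion
  intro l hl1 hl2
  have hMD : MD n k a = Saux k a k + k + 2 * ((n : ℤ) - k) - 2 := by
    have e1 : ∑ u ∈ Icc 1 n, a u = ∑ u ∈ Icc (k + 1 - k) (k - 1), a u := by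
      refine (Finset.sum_subset (Icc_subset_Icc (by omega) (by omega)) ?_).symm
      intro u hu hu'
      simp only [mem_Icc] at hu hu'
      exact h0 u (by omega) (by omega)
    have e2 : ∑ u ∈ Icc (k + 1) (n - 2), a u = 0 := by
      refine Finset.sum_eq_zero fun u hu => ?_
      simp only [mem_Icc] at hu
      exact h0 u (by omega) (by omega)
    rw [MD, e1, e2, Saux]
    ring
  exact main k (by omega) le_rfl l hl1 (by omega)
end

section
/- (Combinatorial content of Corollary 3.17(2), type D, highest weight supported above k.) Let n ≥ 4 and 2 ≤ k ≤ n−2, and let a_1,…,a_n be nonnegative integers with a_u = 0 for all 1 ≤ u ≤ k. Then every integer l with 1 ≤ l ≤ M^D_{k,a} belongs to the step-matrix entry set S^D_{k,a} if and only if a_i ≤ k−1 for all k+1 ≤ i ≤ n−2 and moreover either (a_{n−1} ≤ k−1 and 0 ≤ a_n − a_{n−1} ≤ 2k−1) or (a_n ≤ k−1 and 0 ≤ a_{n−1} − a_n ≤ 2k−1). -/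
open Finset

def pS (k : ℕ) (a : ℕ → ℤ) (j : ℕ) : ℤ := ∑ u ∈ Icc (k + 1) (k + j), a u
def sS (n : ℕ) (a : ℕ → ℤ) (j : ℕ) : ℤ := ∑ u ∈ Icc (n + 1 - j) n, a u

lemma chain_cover (k : ℤ) (f : ℕ → ℤ) :
    ∀ J : ℕ, (∀ j, j < J → f (j + 1) ≤ f j + k) →
      ∀ l : ℤ, f 0 ≤ l → l ≤ f J + k - 1 → ∃ j, j ≤ J ∧ f j ≤ l ∧ l ≤ f j + k - 1 := by
  intro J
  induction J with
  | zero => exact fun _ l h1 h2 => ⟨0, le_refl 0, h1, h2⟩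
  | succ J ih =>
    intro hstep l h1 h2
    by_cases h : f (J + 1) ≤ l
    · exact ⟨J + 1, le_refl _, h, h2⟩
    · obtain ⟨j, hj, hl⟩ := ih (fun j hj => hstep j (Nat.lt_succ_of_lt hj)) l h1
        (by have := hstep J (Nat.lt_succ_self J); omega)
      exact ⟨j, Nat.le_succ_of_le hj, hl⟩

lemma hsumQ (k : ℕ) (a : ℕ → ℤ) (hk1 : 1 ≤ k) (h0 : ∀ u, 1 ≤ u → u ≤ k → a u = 0)
    (i b : ℕ) (hi : i ≤ k) :
    ∑ u ∈ Icc (k + 1 - i) b, (a u : ℚ) = ((∑ u ∈ Icc (k + 1) b, a u : ℤ) : ℚ) := by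
  rw [show ((∑ u ∈ Icc (k + 1) b, a u : ℤ) : ℚ) = ∑ u ∈ Icc (k + 1) b, (a u : ℚ) from by
    push_cast; ring]
  symm
  apply Finset.sum_subset (Finset.Icc_subset_Icc_left (by omega))
  intro u hu hnotu
  simp only [Finset.mem_Icc] at hu hnotu
  have : a u = 0 := h0 u (by omega) (by omega)
  simp [this]

lemma sSQ (n : ℕ) (a : ℕ → ℤ) (j : ℕ) :
    ∑ u ∈ Icc (n + 1 - j) n, (a u : ℚ) = ((sS n a j : ℤ) : ℚ) := by
  rw [sS]; push_cast; ring

lemma hAstep (k : ℕ) (a : ℕ → ℤ) (p : ℕ) :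
    pS k a (p + 1) = pS k a p + a (k + p + 1) := by
  simpa [pS, add_assoc] using Finset.sum_Icc_succ_top (by omega : k + 1 ≤ k + p + 1) a

lemma cov1 (n k m : ℕ) (a : ℕ → ℤ) (hk1 : 2 ≤ k) (hnm : n = k + m) (hm2 : 2 ≤ m)
    (h0 : ∀ u, 1 ≤ u → u ≤ k → a u = 0) (j : ℕ) (l : ℤ) (hjm : j + 1 ≤ m)
    (h1 : pS k a j + j + 1 ≤ l) (h2 : l ≤ pS k a j + j + k) : (l : ℚ) ∈ SD n k a := by
  refine Or.inl (Or.inl ⟨(l - pS k a j - j).toNat, j + 1, by omega, by omega, by omega,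
    by omega, ?_⟩)
  rw [show k + (j + 1) - 1 = k + j from by omega,
    hsumQ k a (by omega) h0 _ (k + j) (by omega), ← pS]
  have hi : (((l - pS k a j - (j:ℤ)).toNat : ℕ) : ℚ) = (l:ℚ) - (pS k a j : ℚ) - (j:ℚ) := by
    have hnn : (0:ℤ) ≤ l - pS k a j - j := by omega
    have h := congrArg (fun t : ℤ => (t : ℚ)) (Int.toNat_of_nonneg hnn)
    push_cast at h
    exact h
  rw [hi]; push_cast; ring

lemma cov2 (n k m : ℕ) (a : ℕ → ℤ) (hk1 : 2 ≤ k) (hnm : n = k + m) (hm2 : 2 ≤ m)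
    (h0 : ∀ u, 1 ≤ u → u ≤ k → a u = 0) (j : ℕ) (l : ℤ) (hjm : j + 1 ≤ m)
    (h1 : pS k a (m - 2) + sS n a (j + 1) + m + j ≤ l)
    (h2 : l ≤ pS k a (m - 2) + sS n a (j + 1) + m + j + k - 1) : (l : ℚ) ∈ SD n k a := by
  set X := pS k a (m - 2) + sS n a (j + 1) + (m : ℤ) + j with hX
  refine Or.inl (Or.inr ⟨(l - X + 1).toNat, j + 1, by omega, by omega, by omega,
    by omega, ?_⟩)
  rw [show n - 2 = k + (m - 2) from by omega,
    hsumQ k a (by omega) h0 _ (k + (m - 2)) (by omega), ← pS, sSQ]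
  have hi : (((l - X + 1).toNat : ℕ) : ℚ) = (l:ℚ) - (X : ℚ) + 1 := by
    have hnn : (0:ℤ) ≤ l - X + 1 := by omega
    have h := congrArg (fun t : ℤ => (t : ℚ)) (Int.toNat_of_nonneg hnn)
    push_cast at h
    exact h
  rw [hi, hX]
  push_cast [hnm]
  ring

lemma cov3 (n k m : ℕ) (a : ℕ → ℤ) (hk1 : 2 ≤ k) (hnm : n = k + m) (hm2 : 2 ≤ m)
    (h0 : ∀ u, 1 ≤ u → u ≤ k → a u = 0) (l : ℤ)
    (h1 : pS k a (m - 2) + pS k a m + 2 * m + 1 ≤ 2 * l)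
    (h2 : 2 * l ≤ pS k a (m - 2) + pS k a m + 2 * m + 2 * k - 3) : (l : ℚ) ∈ SD n k a := by
  set s : ℤ := 2 * l - pS k a (m - 2) - pS k a m - 2 * m + 2 with hs
  have hs3 : 3 ≤ s := by omega
  have hs2k : s ≤ 2 * k - 1 := by omega
  have key : ∀ i j : ℕ, 1 ≤ i → i < j → j ≤ k → (i : ℤ) + j = s → (l : ℚ) ∈ SD n k a := by
    intro i j hi1 hij hjk hijs
    refine Or.inr ⟨i, j, hi1, hij, hjk, ?_⟩
    rw [show n - 2 = k + (m - 2) from by omega,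
      show Icc (k + 1 - j) n = Icc (k + 1 - j) (k + m) from by rw [hnm],
      hsumQ k a (by omega) h0 i (k + (m - 2)) (by omega),
      hsumQ k a (by omega) h0 j (k + m) (by omega), ← pS, ← pS]
    have hcast : (i:ℚ) + (j:ℚ)
        = 2 * (l:ℚ) - ((pS k a (m-2) : ℤ):ℚ) - ((pS k a m : ℤ):ℚ) - 2*(m:ℚ) + 2 := by
      have h := congrArg (fun t : ℤ => (t : ℚ)) (hijs.trans hs)
      push_cast at h
      linarith
    rw [eq_div_iff (by norm_num : (2:ℚ) ≠ 0)]
    push_cast [hnm] at hcast ⊢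
    linarith
  by_cases hcase : s ≤ k + 1
  · exact key 1 (s - 1).toNat (le_refl 1) (by omega) (by omega) (by omega)
  · exact key (s - k).toNat k (by omega) (by omega) (le_refl k) (by omega)

lemma hAmono (n k m : ℕ) (a : ℕ → ℤ) (hnm : n = k + m)
    (ha : ∀ u, 1 ≤ u → u ≤ n → 0 ≤ a u) (p q : ℕ) (hpq : p ≤ q) (hq : q ≤ m) :
    pS k a p ≤ pS k a q := by
  apply Finset.sum_le_sum_of_subset_of_nonneg (Finset.Icc_subset_Icc_right (by omega))
  intro u hu _
  simp only [Finset.mem_Icc] at hu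
  exact ha u (by omega) (by omega)

lemma hBdA (n k m : ℕ) (a : ℕ → ℤ) (hnm : n = k + m) (j : ℕ) (hj : j ≤ m) :
    pS k a (m - j) + sS n a j = pS k a m := by
  have h2 : Icc (n + 1 - j) n = Ico (k + (m - j) + 1) (k + m + 1) := by
    rw [show n + 1 - j = k + (m - j) + 1 from by omega, show n = k + m from hnm,
      Finset.Ico_add_one_right_eq_Icc]
  rw [pS, sS, pS, h2, show Icc (k+1) (k + (m-j)) = Ico (k+1) (k + (m-j) + 1) from
    (Finset.Ico_add_one_right_eq_Icc ..).symm, show Icc (k+1) (k + m) = Ico (k+1) (k + m + 1) from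
    (Finset.Ico_add_one_right_eq_Icc ..).symm]
  exact Finset.sum_Ico_consecutive a (by omega) (by omega)

lemma hM (n k m : ℕ) (a : ℕ → ℤ) (hk1 : 2 ≤ k) (hnm : n = k + m) (hm2 : 2 ≤ m)
    (h0 : ∀ u, 1 ≤ u → u ≤ k → a u = 0) :
    MD n k a = pS k a m + pS k a (m - 2) + 2 * (m : ℤ) + (k : ℤ) - 2 := by
  have h1 : pS k a m = ∑ u ∈ Icc 1 n, a u := by
    rw [pS]
    apply Finset.sum_subset (Finset.Icc_subset_Icc (by omega) (by omega))
    intro u hu hnu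
    simp only [Finset.mem_Icc] at hu hnu
    exact h0 u (by omega) (by omega)
  have h2 : Icc (k + 1) (n - 2) = Icc (k + 1) (k + (m - 2)) := by
    rw [show n - 2 = k + (m - 2) from by omega]
  rw [MD, ← h1, h2, ← pS, hnm]
  push_cast
  ring

lemma reduce (n k m : ℕ) (a : ℕ → ℤ) (hk1 : 2 ≤ k) (hnm : n = k + m) (hm2 : 2 ≤ m)
    (h0 : ∀ u, 1 ≤ u → u ≤ k → a u = 0) (l : ℤ) (hl : (l : ℚ) ∈ SD n k a) :
    (∃ i j : ℕ, 1 ≤ i ∧ i ≤ k ∧ 1 ≤ j ∧ j ≤ m ∧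
      l = pS k a (j - 1) + i + j - 1) ∨
    (∃ i j : ℕ, 1 ≤ i ∧ i ≤ k ∧ 1 ≤ j ∧ j ≤ m ∧
      l = pS k a (m - 2) + sS n a j + m + i + j - 2) ∨
    (∃ i j : ℕ, 1 ≤ i ∧ i < j ∧ j ≤ k ∧
      2 * l = pS k a (m - 2) + pS k a m + i + j + 2 * m - 2) := by
  simp only [SD, Set.mem_union, Set.mem_setOf_eq] at hl
  rcases hl with (⟨i, j, h1, h2, h3, h4, heq⟩ | ⟨i, j, h1, h2, h3, h4, heq⟩) |
    ⟨i, j, h1, h2, h3, heq⟩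
  · left
    rw [show k + j - 1 = k + (j - 1) from by omega,
      hsumQ k a (by omega) h0 i (k + (j - 1)) h2, ← pS] at heq
    exact ⟨i, j, h1, h2, h3, by omega, by exact_mod_cast heq⟩
  · right; left
    rw [show n - 2 = k + (m - 2) from by omega,
      hsumQ k a (by omega) h0 i (k + (m - 2)) h2, ← pS, sSQ] at heq
    have h5 : l = pS k a (m - 2) + sS n a j + (n : ℤ) - k + i + j - 2 := by
      exact_mod_cast heq
    exact ⟨i, j, h1, h2, h3, by omega, by omega⟩
  · right; right
    rw [eq_div_iff (by norm_num : (2:ℚ) ≠ 0), show n - 2 = k + (m - 2) from by omega,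
      show Icc (k + 1 - j) n = Icc (k + 1 - j) (k + m) from by rw [hnm],
      hsumQ k a (by omega) h0 i (k + (m - 2)) (by omega),
      hsumQ k a (by omega) h0 j (k + m) h3, ← pS, ← pS] at heq
    have h5 : l * 2 = pS k a (m - 2) + pS k a m + i + j + 2 * (n:ℤ) - 2 * k - 2 := by
      exact_mod_cast heq
    exact ⟨i, j, h1, h2, h3, by omega⟩


/-- Corollary 3.17(2) for `Dₙ/P(α_k)`: for a highest weight supported above `k`,
every integer in `[1, M^D_{k,a}]` is an entry of the step matrix iff
`a_i ≤ k-1` for `k+1 ≤ i ≤ n-2` together with one of the two boundary conditions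
on `a_{n-1}, a_n`. -/
theorem cor_D_lt_support_above (n k : ℕ) (hn : 4 ≤ n) (hk1 : 2 ≤ k) (hkn : k ≤ n - 2)
    (a : ℕ → ℤ) (ha : ∀ u, 1 ≤ u → u ≤ n → 0 ≤ a u)
    (h0 : ∀ u, 1 ≤ u → u ≤ k → a u = 0) :
    (∀ l : ℤ, 1 ≤ l → l ≤ MD n k a → (l : ℚ) ∈ SD n k a) ↔
      ((∀ i, k + 1 ≤ i → i ≤ n - 2 → a i ≤ (k : ℤ) - 1) ∧
        ((a (n - 1) ≤ (k : ℤ) - 1 ∧ 0 ≤ a n - a (n - 1) ∧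
            a n - a (n - 1) ≤ 2 * (k : ℤ) - 1) ∨
          (a n ≤ (k : ℤ) - 1 ∧ 0 ≤ a (n - 1) - a n ∧
            a (n - 1) - a n ≤ 2 * (k : ℤ) - 1))) := by
  obtain ⟨m, hnm, hm2⟩ : ∃ m, n = k + m ∧ 2 ≤ m := ⟨n - k, by omega, by omega⟩
  have hp0 : pS k a 0 = 0 := by simp [pS]
  have hmono : ∀ p q : ℕ, p ≤ q → q ≤ m → pS k a p ≤ pS k a q :=
    fun p q h1 h2 => hAmono n k m a hnm ha p q h1 h2
  have hpos : ∀ p : ℕ, p ≤ m → 0 ≤ pS k a p := fun p hp => by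
    have := hmono 0 p (Nat.zero_le p) hp; omega
  have hBd : ∀ j : ℕ, j ≤ m → pS k a (m - j) + sS n a j = pS k a m :=
    fun j hj => hBdA n k m a hnm j hj
  have hMval : MD n k a = pS k a m + pS k a (m - 2) + 2 * (m : ℤ) + (k : ℤ) - 2 :=
    hM n k m a hk1 hnm hm2 h0
  have hTop1 : pS k a (m - 1) = pS k a (m - 2) + a (n - 1) := by
    have h := hAstep k a (m - 2)
    rw [show k + (m - 2) + 1 = n - 1 from by omega] at h
    rw [show m - 1 = m - 2 + 1 from by omega]
    exact h
  have hTop2 : pS k a m = pS k a (m - 1) + a n := by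
    have h := hAstep k a (m - 1)
    rw [show k + (m - 1) + 1 = n from by omega] at h
    rw [show m = m - 1 + 1 from by omega]
    exact h
  have hs1 : sS n a 1 = a n := by
    have h := hBd 1 (by omega)
    omega
  have hs2 : sS n a 2 = a (n - 1) + a n := by
    have h := hBd 2 (by omega)
    omega
  have hsm : sS n a m = pS k a m := by
    have h := hBd m (by omega)
    rw [show m - m = 0 from by omega, hp0] at h
    omega
  have hc0 : 0 ≤ a (n - 1) := ha (n - 1) (by omega) (by omega)
  have hq1 : 0 ≤ pS k a (m - 2) := hpos (m - 2) (by omega)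
  have hq2 : pS k a (m - 2) ≤ pS k a m := hmono (m - 2) m (by omega) (le_refl m)
  have hq3 : pS k a (m - 1) = pS k a (m - 2) + a (n - 1) := hTop1
  have hd0 : 0 ≤ a n := ha n (by omega) (by omega)
  -- `sS` lower bounds
  have hsge1 : ∀ j : ℕ, 1 ≤ j → j ≤ m → a n ≤ sS n a j := by
    intro j h1 h2
    have e1 := hBd j h2
    have e2 := hBd 1 (by omega)
    have e3 := hmono (m - j) (m - 1) (by omega) (by omega)
    omega
  have hsge2 : ∀ j : ℕ, 2 ≤ j → j ≤ m → a (n - 1) + a n ≤ sS n a j := by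
    intro j h1 h2
    have e1 := hBd j h2
    have e2 := hBd 2 (by omega)
    have e3 := hmono (m - j) (m - 2) (by omega) (by omega)
    omega
  have hsge0 : ∀ j : ℕ, j ≤ m → 0 ≤ sS n a j := by
    intro j h2
    have e1 := hBd j h2
    have e3 := hmono (m - j) m (by omega) (by omega)
    omega
  constructor
  · -- coverage → conditions
    intro hcov
    constructor
    · -- interior condition
      intro i0 hi1 hi2
      by_contra hbad
      push_neg at hbad
      set p : ℕ := i0 - k with hpdef
      have hp1 : 1 ≤ p := by omega
      have hp2 : p ≤ m - 2 := by omega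
      have hup : pS k a p ≤ pS k a (m - 2) := hmono p (m - 2) hp2 (by omega)
      have hposp : 0 ≤ pS k a p := hpos p (by omega)
      have hposm : 0 ≤ pS k a m := hpos m (le_refl m)
      have hap : pS k a p = pS k a (p - 1) + a i0 := by
        have h := hAstep k a (p - 1)
        rw [show k + (p - 1) + 1 = i0 from by omega] at h
        rw [show p = p - 1 + 1 from by omega]
        exact h
      have hmem := hcov (pS k a p + p) (by omega)
        (by rw [hMval]; have := hmono (m-2) m (by omega) (le_refl m); omega)
      rcases reduce n k m a hk1 hnm hm2 h0 _ hmem with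
        ⟨i, j, h1, h2, h3, h4, heq⟩ | ⟨i, j, h1, h2, h3, h4, heq⟩ |
        ⟨i, j, h1, h2, h3, heq⟩
      · rcases le_or_gt j p with hcase | hcase
        · have e1 := hmono (j - 1) (p - 1) (by omega) (by omega)
          omega
        · have e1 := hmono p (j - 1) (by omega) (by omega)
          omega
      · have e1 := hsge0 j h4
        omega
      · have e1 := hmono (m - 2) m (by omega) (le_refl m)
        omega
    · -- boundary conditions
      have w1 : ¬((k:ℤ) ≤ a (n - 1) ∧ (k:ℤ) ≤ a n) := by
        rintro ⟨hc, hd⟩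
        have hmem := hcov (pS k a (m - 2) + m + k - 1)
          (by have := hpos (m-2) (by omega); omega)
          (by rw [hMval]; omega)
        rcases reduce n k m a hk1 hnm hm2 h0 _ hmem with
          ⟨i, j, h1, h2, h3, h4, heq⟩ | ⟨i, j, h1, h2, h3, h4, heq⟩ |
          ⟨i, j, h1, h2, h3, heq⟩
        · rcases le_or_gt j (m - 1) with hcase | hcase
          · have e1 := hmono (j - 1) (m - 2) (by omega) (by omega)
            omega
          · have e2 : j - 1 = m - 1 := by omega
            rw [e2] at heq
            omega
        · have e1 := hsge1 j h3 h4
          omega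
        · omega
      have w2 : ¬(2 * (k:ℤ) ≤ a n - a (n - 1)) := by
        intro hd
        have hmem := hcov (pS k a (m - 2) + a n + m - 1)
          (by have := hpos (m-2) (by omega); omega)
          (by rw [hMval]; omega)
        rcases reduce n k m a hk1 hnm hm2 h0 _ hmem with
          ⟨i, j, h1, h2, h3, h4, heq⟩ | ⟨i, j, h1, h2, h3, h4, heq⟩ |
          ⟨i, j, h1, h2, h3, heq⟩
        · have e1 := hmono (j - 1) (m - 1) (by omega) (by omega)
          omega
        · have e1 := hsge1 j h3 h4
          omega
        · omega
      have w3 : ¬(2 * (k:ℤ) ≤ a (n - 1) - a n) := by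
        intro hcd
        have hmem := hcov (pS k a (m - 2) + a (n - 1) + m - 1)
          (by have := hpos (m-2) (by omega); omega)
          (by rw [hMval]; omega)
        rcases reduce n k m a hk1 hnm hm2 h0 _ hmem with
          ⟨i, j, h1, h2, h3, h4, heq⟩ | ⟨i, j, h1, h2, h3, h4, heq⟩ |
          ⟨i, j, h1, h2, h3, heq⟩
        · rcases le_or_gt j (m - 1) with hcase | hcase
          · have e1 := hmono (j - 1) (m - 2) (by omega) (by omega)
            omega
          · have e2 : j - 1 = m - 1 := by omega
            rw [e2] at heq
            omega
        · rcases le_or_gt j 1 with hcase | hcase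
          · have e2 : j = 1 := by omega
            rw [e2] at heq
            omega
          · have e1 := hsge2 j (by omega) h4
            omega
        · omega
      omega
  · -- conditions → coverage
    rintro ⟨hC1, hC2⟩ l hl1 hl2
    rw [hMval] at hl2
    have hint : ∀ p : ℕ, p + 1 ≤ m - 2 → a (k + p + 1) ≤ (k:ℤ) - 1 :=
      fun p h => hC1 (k + p + 1) (by omega) (by omega)
    rcases hC2 with ⟨hc, hdc0, hdc⟩ | ⟨hd, hcd0, hcd⟩
    · -- Case 1 : a (n-1) small
      rcases le_or_gt l (pS k a (m - 2) + a (n - 1) + m + k - 1) with hcase | hcase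
      · obtain ⟨j, hj, hfl, hfu⟩ := chain_cover k (fun j => pS k a j + j + 1) (m - 1)
          (by
            intro j hj
            have e3 := hAstep k a j
            rcases le_or_gt (j + 1) (m - 2) with h | h
            · have hb := hint j h
              beta_reduce
              push_cast
              omega
            · have e4 : k + j + 1 = n - 1 := by omega
              rw [e4] at e3
              beta_reduce
              push_cast
              omega)
          l (by beta_reduce; rw [hp0]; push_cast; omega)
          (by
            beta_reduce
            rw [show m - 1 = m - 2 + 1 from by omega, hAstep k a (m - 2),
              show k + (m - 2) + 1 = n - 1 from by omega]
            push_cast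
            omega)
        replace hfl : pS k a j + (j:ℤ) + 1 ≤ l := hfl
        replace hfu : l ≤ pS k a j + (j:ℤ) + 1 + k - 1 := hfu
        exact cov1 n k m a hk1 hnm hm2 h0 j l (by omega) hfl (by omega)
      · rcases le_or_gt l (pS k a (m - 2) + a n + m - 1) with hcase2 | hcase2
        · exact cov3 n k m a hk1 hnm hm2 h0 l (by omega) (by omega)
        · obtain ⟨j, hj, hfl, hfu⟩ := chain_cover k
            (fun j => pS k a (m - 2) + sS n a (j + 1) + m + j) (m - 1)
            (by
              intro j hj
              have e1 := hBd (j + 1) (by omega)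
              have e2 := hBd (j + 1 + 1) (by omega)
              have e3 := hAstep k a (m - j - 2)
              rw [show m - (j + 1) = m - j - 2 + 1 from by omega] at e1
              rw [show m - (j + 1 + 1) = m - j - 2 from by omega] at e2
              rcases Nat.eq_zero_or_pos j with h | h
              · subst h
                rw [show k + (m - 0 - 2) + 1 = n - 1 from by omega] at e3
                beta_reduce
                push_cast
                omega
              · have hb := hint (m - j - 2) (by omega)
                beta_reduce
                push_cast
                omega)
            l
            (by beta_reduce; rw [hs1]; push_cast; omega)
            (by
              beta_reduce
              rw [show m - 1 + 1 = m from by omega, hsm]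
              push_cast
              omega)
          replace hfl : pS k a (m - 2) + sS n a (j + 1) + (m:ℤ) + j ≤ l := hfl
          replace hfu : l ≤ pS k a (m - 2) + sS n a (j + 1) + (m:ℤ) + j + k - 1 := hfu
          exact cov2 n k m a hk1 hnm hm2 h0 j l (by omega) hfl hfu
    · -- Case 2 : a n small
      rcases le_or_gt l (pS k a (m - 2) + m + k - 2) with hcase | hcase
      · obtain ⟨j, hj, hfl, hfu⟩ := chain_cover k (fun j => pS k a j + j + 1) (m - 2)
          (by
            intro j hj
            have e3 := hAstep k a j
            have hb := hint j (by omega)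
            beta_reduce
            push_cast
            omega)
          l (by beta_reduce; rw [hp0]; push_cast; omega)
          (by beta_reduce; push_cast; omega)
        replace hfl : pS k a j + (j:ℤ) + 1 ≤ l := hfl
        replace hfu : l ≤ pS k a j + (j:ℤ) + 1 + k - 1 := hfu
        exact cov1 n k m a hk1 hnm hm2 h0 j l (by omega) hfl (by omega)
      · rcases le_or_gt l (pS k a (m - 2) + a n + m + k - 1) with hcase2 | hcase2
        · refine cov2 n k m a hk1 hnm hm2 h0 0 l (by omega) ?_ ?_
          · rw [hs1]; push_cast; omega
          · rw [hs1]; push_cast; omega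
        · rcases le_or_gt l (pS k a (m - 2) + a (n - 1) + m - 1) with hcase3 | hcase3
          · exact cov3 n k m a hk1 hnm hm2 h0 l (by omega) (by omega)
          · rcases le_or_gt l (pS k a (m - 2) + a (n - 1) + m + k - 1) with hcase4 | hcase4
            · refine cov1 n k m a hk1 hnm hm2 h0 (m - 1) l (by omega) ?_ ?_
              · rw [show m - 1 = m - 2 + 1 from by omega, hAstep k a (m - 2),
                  show k + (m - 2) + 1 = n - 1 from by omega]
                push_cast
                omega
              · rw [show m - 1 = m - 2 + 1 from by omega, hAstep k a (m - 2),
                  show k + (m - 2) + 1 = n - 1 from by omega]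
                push_cast
                omega
            · obtain ⟨j, hj, hfl, hfu⟩ := chain_cover k
                (fun j => pS k a (m - 2) + sS n a (j + 2) + m + j + 1) (m - 2)
                (by
                  intro j hj
                  have e1 := hBd (j + 2) (by omega)
                  have e2 := hBd (j + 1 + 2) (by omega)
                  have e3 := hAstep k a (m - j - 3)
                  rw [show m - (j + 2) = m - j - 3 + 1 from by omega] at e1
                  rw [show m - (j + 1 + 2) = m - j - 3 from by omega] at e2
                  have hb := hint (m - j - 3) (by omega)
                  beta_reduce
                  push_cast
                  omega)
                l
                (by beta_reduce; rw [hs2]; push_cast; omega)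
                (by
                  beta_reduce
                  rw [show m - 2 + 2 = m from by omega, hsm]
                  push_cast
                  omega)
              replace hfl : pS k a (m - 2) + sS n a (j + 2) + (m:ℤ) + j + 1 ≤ l := hfl
              replace hfu : l ≤ pS k a (m - 2) + sS n a (j + 2) + (m:ℤ) + j + 1 + k - 1 := hfu
              refine cov2 n k m a hk1 hnm hm2 h0 (j + 1) l (by omega) ?_ ?_
              · rw [show j + 1 + 1 = j + 2 from by omega]; push_cast; omega
              · rw [show j + 1 + 1 = j + 2 from by omega]; push_cast; omega
end

section
/- (Combinatorial content of Corollary 3.18(1), type D, k = n.) Let n ≥ 5 and let a_1,…,a_n be integers with a_1 = a_2 = a_{n−2} = a_{n−1} = a_n = 0 and 0 ≤ a_u ≤ 1 for all 3 ≤ u ≤ n−3. Then every integer l with 1 ≤ l ≤ M^D_{n,a} = 2Σ_{u=3}^{n−3} a_u + 2n − 3 belongs to the step-matrix entry set S^D_{n,a}. -/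
open Finset

/-- The step-matrix entry set `S^D_{n,a}` (the case `k = n`). -/
def SDn (n : ℕ) (a : ℕ → ℤ) : Set ℚ :=
  {x | ∃ i j : ℕ, 1 ≤ i ∧ i < j ∧ j ≤ n ∧
    x = (∑ u ∈ Icc (n + 1 - i) n, (a u : ℚ))
      + (∑ u ∈ Icc (n + 1 - j) (n - 2), (a u : ℚ)) + i + j - 2}

/-- Corollary 3.18(1) for `Dₙ/P(αₙ)`: if `a₁ = a₂ = a_{n-2} = a_{n-1} = aₙ = 0` and
`0 ≤ aᵤ ≤ 1` for `3 ≤ u ≤ n-3`, then every integer in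
`[1, M^D_{n,a} = 2∑_{u=3}^{n-3} aᵤ + 2n - 3]` is an entry of the step matrix. -/
theorem cor_D_eq_one (n : ℕ) (hn : 5 ≤ n) (a : ℕ → ℤ)
    (h1 : a 1 = 0) (h2 : a 2 = 0) (hn2 : a (n - 2) = 0) (hn1 : a (n - 1) = 0)
    (hnn : a n = 0)
    (hb : ∀ u, 3 ≤ u → u ≤ n - 3 → 0 ≤ a u ∧ a u ≤ 1) :
    ∀ l : ℤ, 1 ≤ l →
      l ≤ 2 * (∑ u ∈ Icc 3 (n - 3), a u) + 2 * (n : ℤ) - 3 →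
      (l : ℚ) ∈ SDn n a := by
  intro l hl1 hl2
  set A : ℤ := ∑ u ∈ Icc 3 (n - 3), a u with hAdef
  set g : ℕ → ℤ := (fun m => ∑ u ∈ Icc (n + 1 - m) n, a u) with hgdef
  set F : ℕ → ℤ := (fun m => g m + m) with hFdef
  -- bounds on the relevant a's
  have ha' : ∀ m, 1 ≤ m → m ≤ n - 1 → 0 ≤ a (n - m) ∧ a (n - m) ≤ 1 := by
    intro m hm1 hm2
    have hcases : n - m = 1 ∨ n - m = 2 ∨ n - m = n - 1 ∨ n - m = n - 2 ∨
        (3 ≤ n - m ∧ n - m ≤ n - 3) := by omega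
    rcases hcases with h | h | h | h | ⟨h, h'⟩
    · rw [h, h1]; constructor <;> norm_num
    · rw [h, h2]; constructor <;> norm_num
    · rw [h, hn1]; constructor <;> norm_num
    · rw [h, hn2]; constructor <;> norm_num
    · exact hb _ h h'
  have hA0 : 0 ≤ A := by
    apply Finset.sum_nonneg
    intro u hu
    rw [Finset.mem_Icc] at hu
    exact (hb u hu.1 hu.2).1
  -- step for g
  have gstep : ∀ m, 1 ≤ m → m ≤ n - 1 → g (m + 1) = a (n - m) + g m := by
    intro m hm1 hm2
    simp only [hgdef]
    have e1 : n + 1 - (m + 1) = n - m := by omega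
    have e2 : n + 1 - m = n - m + 1 := by omega
    rw [e1, e2]
    have hins : Icc (n - m) n = insert (n - m) (Icc (n - m + 1) n) := by
      ext u
      simp only [Finset.mem_Icc, Finset.mem_insert]
      omega
    rw [hins, Finset.sum_insert (by simp only [Finset.mem_Icc]; omega)]
  -- step for F
  have Fstep : ∀ m, 1 ≤ m → m ≤ n - 1 →
      F m + 1 ≤ F (m + 1) ∧ F (m + 1) ≤ F m + 2 := by
    intro m hm1 hm2
    have hg' := gstep m hm1 hm2
    have hab := ha' m hm1 hm2
    simp only [hFdef]
    rw [hg']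
    push_cast
    constructor <;> linarith
  -- F is strictly monotone
  have Fmono : ∀ p q, 1 ≤ p → p < q → q ≤ n → F p < F q := by
    intro p q hp hpq
    induction q with
    | zero => omega
    | succ q ih =>
      intro hq
      rcases Nat.lt_succ_iff_lt_or_eq.mp hpq with h | h
      · have h1' := ih h (by omega)
        have h2' := (Fstep q (by omega) (by omega)).1
        linarith
      · subst h
        have := (Fstep p hp (by omega)).1
        linarith
  -- values of F at the ends
  have hF1 : F 1 = 1 := by
    simp only [hFdef, hgdef]
    have : n + 1 - 1 = n := by omega
    rw [this, Finset.Icc_self, Finset.sum_singleton, hnn]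
    norm_num
  have hzero3 : ∀ u, n - 2 ≤ u → u ≤ n → a u = 0 := by
    intro u hu1 hu2
    have : u = n - 2 ∨ u = n - 1 ∨ u = n := by omega
    rcases this with h | h | h <;> rw [h] <;> assumption
  have hF2 : F 2 = 2 := by
    simp only [hFdef, hgdef]
    have h0 : (∑ u ∈ Icc (n + 1 - 2) n, a u) = 0 := by
      apply Finset.sum_eq_zero
      intro u hu
      rw [Finset.mem_Icc] at hu
      exact hzero3 u (by omega) hu.2
    rw [h0]; norm_num
  have hF3 : F 3 = 3 := by
    simp only [hFdef, hgdef]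
    have h0 : (∑ u ∈ Icc (n + 1 - 3) n, a u) = 0 := by
      apply Finset.sum_eq_zero
      intro u hu
      rw [Finset.mem_Icc] at hu
      exact hzero3 u (by omega) hu.2
    rw [h0]; norm_num
  -- top sums equal A
  have hAsum : ∀ c, 1 ≤ c → c ≤ 3 → (∑ u ∈ Icc c n, a u) = A := by
    intro c hc1 hc2
    rw [hAdef]
    symm
    apply Finset.sum_subset
    · intro u hu
      rw [Finset.mem_Icc] at *
      omega
    · intro u hu1 hu2
      rw [Finset.mem_Icc] at hu1 hu2
      have : u = 1 ∨ u = 2 ∨ u = n - 2 ∨ u = n - 1 ∨ u = n := by omega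
      rcases this with h | h | h | h | h <;> rw [h] <;> assumption
  have hFn : F n = A + n := by
    simp only [hFdef, hgdef]
    have e : n + 1 - n = 1 := by omega
    rw [e, hAsum 1 (by omega) (by omega)]
  have hFn1 : F (n - 1) = A + n - 1 := by
    simp only [hFdef, hgdef]
    have e : n + 1 - (n - 1) = 2 := by omega
    have e2 : ((n - 1 : ℕ) : ℤ) = (n : ℤ) - 1 := by omega
    rw [e, hAsum 2 (by omega) (by omega), e2]
    ring
  have hFn2 : F (n - 2) = A + n - 2 := by
    simp only [hFdef, hgdef]
    have e : n + 1 - (n - 2) = 3 := by omega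
    have e2 : ((n - 2 : ℕ) : ℤ) = (n : ℤ) - 2 := by omega
    rw [e, hAsum 3 (by omega) (by omega), e2]
    ring
  -- the key "almost surjectivity" lemma
  have key : ∀ m, 1 ≤ m → m ≤ n → ∀ v : ℤ, 1 ≤ v → v ≤ F m →
      ∃ p, 1 ≤ p ∧ p ≤ m ∧ (F p = v ∨ F p = v + 1) := by
    intro m hm1
    induction m, hm1 using Nat.le_induction with
    | base =>
      intro _ v hv1 hv2
      rw [hF1] at hv2
      exact ⟨1, le_refl _, le_refl _, Or.inl (by rw [hF1]; linarith)⟩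
    | succ m hm ih =>
      intro hmn v hv1 hv2
      rcases le_or_gt v (F m) with h | h
      · obtain ⟨p, hp1, hp2, hp3⟩ := ih (by omega) v hv1 h
        exact ⟨p, hp1, by omega, hp3⟩
      · have hs := Fstep m hm (by omega)
        rcases eq_or_lt_of_le hv2 with he | hlt
        · exact ⟨m + 1, by omega, le_refl _, Or.inl he.symm⟩
        · exact ⟨m + 1, by omega, le_refl _, Or.inr (by linarith [hs.1, hs.2])⟩
  -- membership construction
  have mem : ∀ i j : ℕ, 1 ≤ i → i < j → j ≤ n → F i + F j = l + 2 →
      (l : ℚ) ∈ SDn n a := by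
    intro i j hi hij hj hF
    refine ⟨i, j, hi, hij, hj, ?_⟩
    have hsum2 : (∑ u ∈ Icc (n + 1 - j) (n - 2), a u) = g j := by
      rw [hgdef]
      apply Finset.sum_subset
      · intro u hu
        rw [Finset.mem_Icc] at *
        omega
      · intro u hu1 hu2
        rw [Finset.mem_Icc] at hu1 hu2
        exact hzero3 u (by omega) hu1.2
    have e1 : (∑ u ∈ Icc (n + 1 - i) n, (a u : ℚ)) = ((g i : ℤ) : ℚ) := by
      rw [hgdef]; norm_cast
    have e2 : (∑ u ∈ Icc (n + 1 - j) (n - 2), (a u : ℚ)) = ((g j : ℤ) : ℚ) := by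
      rw [← hsum2]; norm_cast
    rw [e1, e2]
    simp only [hFdef] at hF
    have hq : ((g i : ℤ) : ℚ) + (i : ℚ) + (((g j : ℤ) : ℚ) + (j : ℚ)) = (l : ℚ) + 2 := by
      exact_mod_cast hF
    linarith
  -- now the case analysis
  have hnz : (5 : ℤ) ≤ (n : ℤ) := by exact_mod_cast hn
  rcases le_or_gt l (A + n) with hc | hc
  · -- lower half
    rcases le_or_gt l 2 with hl2' | hl3
    · have : l = 1 ∨ l = 2 := by omega
      rcases this with h | h
      · exact mem 1 2 (by norm_num) (by norm_num) (by omega)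
          (by rw [hF1, hF2, h])
      · exact mem 1 3 (by norm_num) (by norm_num) (by omega)
          (by rw [hF1, hF3, h]; norm_num)
    · -- 3 ≤ l ≤ A + n
      obtain ⟨m, hm1, hm2, hm3⟩ := key n (by omega) (le_refl n) l (by linarith)
        (by rw [hFn]; linarith)
      rcases hm3 with hFm | hFm
      · have h3m : 3 ≤ m := by
          by_contra hcon
          have : m = 1 ∨ m = 2 := by omega
          rcases this with h | h <;> subst h
          · rw [hF1] at hFm; linarith
          · rw [hF2] at hFm; linarith
        exact mem 2 m (by norm_num) (by omega) hm2 (by rw [hF2, hFm]; ring)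
      · have h2m : 2 ≤ m := by
          by_contra hcon
          have : m = 1 := by omega
          subst this; rw [hF1] at hFm; linarith
        exact mem 1 m (by norm_num) (by omega) hm2 (by rw [hF1, hFm]; ring)
  · -- upper half : l ≥ A + n + 1
    have hc' : A + (n : ℤ) + 1 ≤ l := Int.lt_iff_add_one_le.mp hc
    rcases le_or_gt l (2 * A + 2 * (n : ℤ) - 5) with hl5 | hl4
    · -- middle range
      obtain ⟨m, hm1, hm2, hm3⟩ := key n (by omega) (le_refl n)
        (l + 2 - (A + (n : ℤ))) (by linarith) (by rw [hFn]; linarith)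
      rcases hm3 with hFm | hFm
      · have hmn : m < n := by
          rcases lt_or_eq_of_le hm2 with h | h
          · exact h
          · exfalso; rw [h, hFn] at hFm; linarith
        exact mem m n hm1 hmn (le_refl n) (by rw [hFm, hFn]; ring)
      · have hmn : m < n - 1 := by
          by_contra hcon
          have : m = n - 1 ∨ m = n := by omega
          rcases this with h | h
          · rw [h, hFn1] at hFm; linarith
          · rw [h, hFn] at hFm; linarith
        exact mem m (n - 1) hm1 hmn (by omega) (by rw [hFm, hFn1]; ring)
    · -- top two values
      have hl4' : 2 * A + 2 * (n : ℤ) - 4 ≤ l := by linarith [Int.lt_iff_add_one_le.mp hl4]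
      rcases lt_or_eq_of_le hl2 with h | h
      · have hle : l = 2 * A + 2 * (n : ℤ) - 4 := by
          have := Int.lt_iff_add_one_le.mp h
          linarith
        exact mem (n - 2) n (by omega) (by omega) (le_refl n)
          (by rw [hFn2, hFn, hle]; ring)
      · exact mem (n - 1) n (by omega) (by omega) (le_refl n)
          (by rw [hFn1, hFn, h]; ring)
end

section
/- (Combinatorial content of Corollary 3.18(2), type D, k = n.) Let n ≥ 4 and let a_1,…,a_n be integers with a_u = 0 for all 2 ≤ u ≤ n−2, a_n = 0, 0 ≤ a_1 ≤ n−4, and 0 ≤ a_{n−1} ≤ n−4. Then every integer l with 1 ≤ l ≤ M^D_{n,a} = a_1 + a_{n−1} + 2n − 3 belongs to the step-matrix entry set S^D_{n,a}. -/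
open Finset

lemma sum_eval (n : ℕ) (hn : 4 ≤ n) (a : ℕ → ℤ)
    (h0 : ∀ u, 2 ≤ u → u ≤ n - 2 → a u = 0) (hnn : a n = 0)
    (m N : ℕ) (hm : 1 ≤ m) (hN : N ≤ n) :
    ∑ u ∈ Icc m N, (a u : ℚ) =
      (if m ≤ 1 ∧ 1 ≤ N then (a 1 : ℚ) else 0)
        + (if m ≤ n - 1 ∧ n - 1 ≤ N then (a (n - 1) : ℚ) else 0) := by
  have hcongr : ∀ u ∈ Icc m N,
      (a u : ℚ) = (if u = 1 then (a 1 : ℚ) else 0) + (if u = n - 1 then (a (n-1) : ℚ) else 0) := by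
    intro u hu
    simp only [mem_Icc] at hu
    rcases eq_or_ne u 1 with rfl | hu1
    · rw [if_pos rfl, if_neg (by omega), add_zero]
    · rcases eq_or_ne u (n - 1) with rfl | hu2
      · rw [if_neg hu1, if_pos rfl, zero_add]
      · rcases eq_or_ne u n with rfl | hu3
        · rw [if_neg hu1, if_neg hu2, hnn]; norm_num
        · rw [if_neg hu1, if_neg hu2, h0 u (by omega) (by omega)]; norm_num
  rw [Finset.sum_congr rfl hcongr, Finset.sum_add_distrib,
    Finset.sum_ite_eq' (Icc m N) 1 (fun _ => (a 1 : ℚ)),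
    Finset.sum_ite_eq' (Icc m N) (n - 1) (fun _ => (a (n-1) : ℚ))]
  simp only [mem_Icc]

/-- Corollary 3.18(2) for `Dₙ/P(αₙ)`: if `aᵤ = 0` for `2 ≤ u ≤ n-2`, `aₙ = 0`, and
`0 ≤ a₁, a_{n-1} ≤ n-4`, then every integer in
`[1, M^D_{n,a} = a₁ + a_{n-1} + 2n - 3]` is an entry of the step matrix. -/
theorem cor_D_eq_two (n : ℕ) (hn : 4 ≤ n) (a : ℕ → ℤ)
    (h0 : ∀ u, 2 ≤ u → u ≤ n - 2 → a u = 0) (hnn : a n = 0)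
    (h1 : 0 ≤ a 1 ∧ a 1 ≤ (n : ℤ) - 4)
    (hn1 : 0 ≤ a (n - 1) ∧ a (n - 1) ≤ (n : ℤ) - 4) :
    ∀ l : ℤ, 1 ≤ l →
      l ≤ a 1 + a (n - 1) + 2 * (n : ℤ) - 3 →
      (l : ℚ) ∈ SDn n a := by
  intro l hl1 hl2
  obtain ⟨ha1, ha1'⟩ := h1
  obtain ⟨ha2, ha2'⟩ := hn1
  by_cases c1 : l ≤ (n : ℤ) - 2
  · -- i = 1, j = l + 1
    obtain ⟨j, hj⟩ : ∃ j : ℕ, (j : ℤ) = l + 1 := ⟨_, Int.toNat_of_nonneg (by omega)⟩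
    refine ⟨1, j, le_refl 1, by omega, by omega, ?_⟩
    rw [sum_eval n hn a h0 hnn _ _ (by omega) (by omega),
      sum_eval n hn a h0 hnn _ _ (by omega) (by omega)]
    have hj' : (j : ℚ) = (l : ℚ) + 1 := by exact_mod_cast hj
    split_ifs <;> first | (exfalso; omega) | (push_cast; linarith)
  · by_cases c3 : a (n - 1) + 2 * (n : ℤ) - 4 ≤ l
    · -- j = n, i = l - a 1 - a (n-1) - n + 2
      obtain ⟨i, hi⟩ : ∃ i : ℕ, (i : ℤ) = l - a 1 - a (n - 1) - (n : ℤ) + 2 :=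
        ⟨_, Int.toNat_of_nonneg (by omega)⟩
      refine ⟨i, n, by omega, by omega, le_refl n, ?_⟩
      rw [sum_eval n hn a h0 hnn _ _ (by omega) (by omega),
        sum_eval n hn a h0 hnn _ _ (by omega) (by omega)]
      have hi' : (i : ℚ) = (l : ℚ) - (a 1 : ℚ) - (a (n-1) : ℚ) - (n : ℚ) + 2 := by
        exact_mod_cast hi
      split_ifs <;> first | (exfalso; omega) | (push_cast; linarith)
    · by_cases c2 : l - a (n - 1) ≤ (n : ℤ) - 1
      · -- i = 2, j = l - a (n-1)
        obtain ⟨j, hj⟩ : ∃ j : ℕ, (j : ℤ) = l - a (n - 1) :=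
          ⟨_, Int.toNat_of_nonneg (by omega)⟩
        refine ⟨2, j, by omega, by omega, by omega, ?_⟩
        rw [sum_eval n hn a h0 hnn _ _ (by omega) (by omega),
          sum_eval n hn a h0 hnn _ _ (by omega) (by omega)]
        have hj' : (j : ℚ) = (l : ℚ) - (a (n-1) : ℚ) := by exact_mod_cast hj
        split_ifs <;> first | (exfalso; omega) | (push_cast; linarith)
      · -- j = n - 1, i = l - a (n-1) - n + 3
        obtain ⟨i, hi⟩ : ∃ i : ℕ, (i : ℤ) = l - a (n - 1) - (n : ℤ) + 3 :=
          ⟨_, Int.toNat_of_nonneg (by omega)⟩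
        refine ⟨i, n - 1, by omega, by omega, by omega, ?_⟩
        rw [sum_eval n hn a h0 hnn _ _ (by omega) (by omega),
          sum_eval n hn a h0 hnn _ _ (by omega) (by omega)]
        have hi' : (i : ℚ) = (l : ℚ) - (a (n-1) : ℚ) - (n : ℚ) + 3 := by exact_mod_cast hi
        have hn' : ((n - 1 : ℕ) : ℚ) = (n : ℚ) - 1 := by
          push_cast [Nat.cast_sub (show 1 ≤ n by omega)]; ring
        split_ifs <;> first | (exfalso; omega) | (push_cast [hn']; linarith)
end

section
/- (Combinatorial content of the finiteness corollary for type B, k < n: there are only finitely many initialized irreducible homogeneous ACM bundles on B_n/P(α_k).) Fix integers n ≥ 2 and 1 ≤ k ≤ n−1. Then the set of n-tuples (a_1,…,a_n) of nonnegative integers with a_k = 0 such that every integer l with 1 ≤ l ≤ M^B_{k,a} belongs to the step-matrix entry set S^B_{k,a} is finite. -/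
open Finset

/-- The step-matrix entry set `S^B_{k,a}`. -/
def SB (n k : ℕ) (a : ℕ → ℤ) : Set ℚ :=
  {x | ∃ i j : ℕ, 1 ≤ i ∧ i ≤ k ∧ 1 ≤ j ∧ j ≤ n - k ∧
    x = (∑ u ∈ Icc (k + 1 - i) (k + j - 1), (a u : ℚ)) + i + j - 1} ∪
  {x | ∃ i j : ℕ, 1 ≤ i ∧ i ≤ k ∧ 1 ≤ j ∧ j ≤ n - k ∧
    x = (∑ u ∈ Icc (k + 1 - i) (n - 1), (a u : ℚ))
      + (∑ u ∈ Icc (n + 1 - j) (n - 1), (a u : ℚ)) + (a n : ℚ)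
      + n - k + i + j - 1} ∪
  {x | ∃ i j : ℕ, 1 ≤ i ∧ i ≤ j ∧ j ≤ k ∧
    x = ((∑ u ∈ Icc (k + 1 - i) (n - 1), (a u : ℚ))
      + (∑ u ∈ Icc (k + 1 - j) (n - 1), (a u : ℚ)) + (a n : ℚ)
      + i + j + 2 * n - 2 * k - 1) / 2}

/-- `M^B_{k,a}`, the largest entry of the step matrix. -/
def MB (n k : ℕ) (a : ℕ → ℤ) : ℤ :=
  (∑ u ∈ Icc 1 (n - 1), a u) + (∑ u ∈ Icc (k + 1) (n - 1), a u) + a n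
    + 2 * (n : ℤ) - (k : ℤ) - 1

/-- Finiteness for type `B`, `k < n`: there are only finitely many tuples
`(a₁, …, aₙ)` of nonnegative integers with `a_k = 0` (encoded as functions
`ℕ → ℤ` supported on `[1, n]`) such that every integer in `[1, M^B_{k,a}]` is an
entry of the step matrix; i.e. only finitely many initialized irreducible
homogeneous ACM bundles on `Bₙ/P(α_k)`. -/
theorem finiteness_B_lt (n k : ℕ) (hn : 2 ≤ n) (hk1 : 1 ≤ k) (hkn : k ≤ n - 1) :
    {a : ℕ → ℤ | (∀ u, 1 ≤ u → u ≤ n → 0 ≤ a u) ∧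
      (∀ u, u = 0 ∨ n < u → a u = 0) ∧ a k = 0 ∧
      (∀ l : ℤ, 1 ≤ l → l ≤ MB n k a → (l : ℚ) ∈ SB n k a)}.Finite := by
  have hbound : ∀ a : ℕ → ℤ,
      ((∀ u, 1 ≤ u → u ≤ n → 0 ≤ a u) ∧
        (∀ u, u = 0 ∨ n < u → a u = 0) ∧ a k = 0 ∧
        (∀ l : ℤ, 1 ≤ l → l ≤ MB n k a → (l : ℚ) ∈ SB n k a)) →
      ∀ u : ℕ, 0 ≤ a u ∧ a u ≤ 3 * (n : ℤ) * n := by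
    rintro a ⟨h1, h2, _h3, h4⟩ u
    have hCnn : (0 : ℤ) ≤ 3 * (n : ℤ) * n := by positivity
    rcases le_or_gt u n with hu | hu
    swap
    · rw [h2 u (Or.inr hu)]; exact ⟨le_rfl, hCnn⟩
    rcases Nat.eq_zero_or_pos u with rfl | hu1
    · rw [h2 0 (Or.inl rfl)]; exact ⟨le_rfl, hCnn⟩
    -- now 1 ≤ u ≤ n
    have hS1 : ∀ v ∈ Icc 1 (n - 1), 0 ≤ a v := by
      intro v hv; rw [mem_Icc] at hv; exact h1 v hv.1 (by omega)
    have hS2 : (0 : ℤ) ≤ ∑ v ∈ Icc (k + 1) (n - 1), a v := by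
      apply Finset.sum_nonneg
      intro v hv; rw [mem_Icc] at hv; exact h1 v (by omega) (by omega)
    have han : 0 ≤ a n := h1 n (by omega) le_rfl
    have hz : (0 : ℤ) ≤ 2 * (n : ℤ) - (k : ℤ) - 1 := by omega
    have haM : a u ≤ MB n k a := by
      unfold MB
      rcases le_or_gt u (n - 1) with h' | h'
      · have h5 : a u ≤ ∑ v ∈ Icc 1 (n - 1), a v :=
          Finset.single_le_sum hS1 (by rw [mem_Icc]; omega)
        linarith
      · have hun : u = n := by omega
        have h5 : (0 : ℤ) ≤ ∑ v ∈ Icc 1 (n - 1), a v := Finset.sum_nonneg hS1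
        rw [hun]
        linarith
    have hMC : MB n k a ≤ 3 * (n : ℤ) * n := by
      set M := MB n k a with hM
      rcases lt_or_ge M 1 with hM1 | hM1
      · omega
      set T : Finset ℚ :=
        ((Icc 1 n ×ˢ Icc 1 n).image fun p =>
          (∑ u ∈ Icc (k + 1 - p.1) (k + p.2 - 1), (a u : ℚ)) + p.1 + p.2 - 1) ∪
        ((Icc 1 n ×ˢ Icc 1 n).image fun p =>
          (∑ u ∈ Icc (k + 1 - p.1) (n - 1), (a u : ℚ))
            + (∑ u ∈ Icc (n + 1 - p.2) (n - 1), (a u : ℚ)) + (a n : ℚ)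
            + n - k + p.1 + p.2 - 1) ∪
        ((Icc 1 n ×ˢ Icc 1 n).image fun p =>
          ((∑ u ∈ Icc (k + 1 - p.1) (n - 1), (a u : ℚ))
            + (∑ u ∈ Icc (k + 1 - p.2) (n - 1), (a u : ℚ)) + (a n : ℚ)
            + p.1 + p.2 + 2 * n - 2 * k - 1) / 2) with hT
      have hsub : ∀ x ∈ SB n k a, x ∈ T := by
        intro x hx
        simp only [SB, Set.mem_union, Set.mem_setOf_eq] at hx
        rcases hx with (⟨i, j, hi1, hik, hj1, hjnk, hx⟩ | ⟨i, j, hi1, hik, hj1, hjnk, hx⟩) |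
          ⟨i, j, hi1, hij, hjk, hx⟩
        · refine Finset.mem_union_left _ (Finset.mem_union_left _ ?_)
          exact Finset.mem_image.2 ⟨(i, j), Finset.mem_product.2
            ⟨Finset.mem_Icc.2 ⟨hi1, by omega⟩, Finset.mem_Icc.2 ⟨hj1, by omega⟩⟩, hx.symm⟩
        · refine Finset.mem_union_left _ (Finset.mem_union_right _ ?_)
          exact Finset.mem_image.2 ⟨(i, j), Finset.mem_product.2
            ⟨Finset.mem_Icc.2 ⟨hi1, by omega⟩, Finset.mem_Icc.2 ⟨hj1, by omega⟩⟩, hx.symm⟩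
        · refine Finset.mem_union_right _ ?_
          exact Finset.mem_image.2 ⟨(i, j), Finset.mem_product.2
            ⟨Finset.mem_Icc.2 ⟨hi1, by omega⟩, Finset.mem_Icc.2 ⟨by omega, by omega⟩⟩, hx.symm⟩
      have hp : (Icc (1 : ℕ) n ×ˢ Icc (1 : ℕ) n).card = n * n := by
        simp [Finset.card_product]
      have hTcard : T.card ≤ 3 * (n * n) := by
        rw [hT]
        refine (Finset.card_union_le _ _).trans ?_
        refine le_trans (Nat.add_le_add_right (Finset.card_union_le _ _) _) ?_
        calc _ ≤ (n * n) + (n * n) + (n * n) := by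
              gcongr <;> exact (Finset.card_image_le).trans (le_of_eq hp)
          _ = 3 * (n * n) := by ring
      have hinj : (Finset.Icc (1 : ℤ) M).card ≤ T.card := by
        apply Finset.card_le_card_of_injOn (fun l : ℤ => (l : ℚ))
        · intro l hl
          rw [Finset.mem_coe, Finset.mem_Icc] at hl
          exact hsub _ (h4 l hl.1 hl.2)
        · intro x _ y _ hxy
          exact Int.cast_injective hxy
      rw [Int.card_Icc] at hinj
      have h6 : ((M + 1 - 1).toNat : ℤ) ≤ 3 * ((n : ℤ) * n) := by
        exact_mod_cast le_trans hinj hTcard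
      have h7 : M + 1 - 1 = M := by ring
      rw [h7] at h6
      have h8 := Int.self_le_toNat M
      linarith
    exact ⟨h1 u hu1 hu, le_trans haM hMC⟩
  apply Set.Finite.of_finite_image (f := fun (a : ℕ → ℤ) (i : Fin (n + 1)) => a i)
  · apply Set.Finite.subset
      (Set.Finite.pi (fun _ : Fin (n + 1) => Set.finite_Icc (0 : ℤ) (3 * (n : ℤ) * n)))
    rintro _ ⟨a, ha, rfl⟩
    intro i _
    exact ⟨(hbound a ha i).1, (hbound a ha i).2⟩
  · rintro a ha b hb h
    funext u
    rcases le_or_gt u n with hu | hu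
    · exact congrFun h ⟨u, by omega⟩
    · rw [ha.2.1 u (Or.inr hu), hb.2.1 u (Or.inr hu)]
end
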